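/- Every abelian group is amenable (existence of an invariant mean on ℓ^∞(G) for G abelian). -/

import Mathlib

/-- The space `ℓ^∞(X)` of bounded real-valued functions on a set `X`,
as a submodule of `X → ℝ`. -/
def ellInfty (X : Type*) : Submodule ℝ (X → ℝ) where
  carrier := {f | ∃ C, ∀ x, |f x| ≤ C}
  add_mem' := by
    rintro f g ⟨C, hC⟩ ⟨D, hD⟩
    exact ⟨C + D, fun x => (abs_add_le _ _).trans (add_le_add (hC x) (hD x))⟩
  zero_mem' := ⟨0, fun x => by simp⟩
  smul_mem' := by
    rintro c f ⟨C, hC⟩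
    exact ⟨|c| * C, fun x => by
      simpa [abs_mul] using mul_le_mul_of_nonneg_left (hC x) (abs_nonneg c)⟩

/-- The constant function `1` as an element of `ℓ^∞(X)`. -/
def oneFn (X : Type*) : ellInfty X := ⟨fun _ => 1, ⟨1, fun _ => by norm_num⟩⟩

/-- A mean on `ℓ^∞(X)`: a positive unital linear functional. -/
def IsMean {X : Type*} (m : ellInfty X →ₗ[ℝ] ℝ) : Prop :=
  (∀ f : ellInfty X, (∀ x, 0 ≤ f.1 x) → 0 ≤ m f) ∧ m (oneFn X) = 1

/-- The action of `g : G` on `ℓ^∞(X)` induced by an action of `G` on `X`: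
`(g · f)(x) = f(g⁻¹ • x)`. -/
def actL {G X : Type*} [Group G] [MulAction G X] (g : G) (f : ellInfty X) : ellInfty X :=
  ⟨fun x => f.1 (g⁻¹ • x), by obtain ⟨C, hC⟩ := f.2; exact ⟨C, fun x => hC _⟩⟩

/-- Existence of a `G`-invariant mean on `ℓ^∞(X)`. -/
def HasInvMean (G X : Type*) [Group G] [MulAction G X] : Prop :=
  ∃ m : ellInfty X →ₗ[ℝ] ℝ, IsMean m ∧ ∀ (g : G) (f : ellInfty X), m (actL g f) = m f

/-- A group is amenable if there is a left-translation-invariant mean on `ℓ^∞(G)`. -/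
def Amenable (G : Type*) [Group G] : Prop := HasInvMean G G

section Aux

open Pointwise

variable {G : Type*} [CommGroup G]

/-- The supremum over `x` of the average of `f` over the translates `a i * x`. -/
noncomputable def avgSup (f : ellInfty G) {n : ℕ} (a : Fin n → G) : ℝ :=
  ⨆ x : G, (∑ i, f.1 (a i * x)) / n

lemma exists_bound (f : ellInfty G) : ∃ C, 0 ≤ C ∧ ∀ x, |f.1 x| ≤ C := by
  obtain ⟨C, hC⟩ := f.2
  exact ⟨C, (abs_nonneg _).trans (hC 1), hC⟩

lemma avg_le {f : ellInfty G} {C : ℝ} (hC : ∀ x, f.1 x ≤ C) {n : ℕ} (hn : 0 < n)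
    (a : Fin n → G) (x : G) : (∑ i, f.1 (a i * x)) / n ≤ C := by
  rw [div_le_iff₀ (by positivity)]
  calc ∑ i, f.1 (a i * x) ≤ ∑ _i : Fin n, C := Finset.sum_le_sum fun i _ => hC _
    _ = C * n := by simp [mul_comm]

lemma le_avg {f : ellInfty G} {C : ℝ} (hC : ∀ x, -C ≤ f.1 x) {n : ℕ} (hn : 0 < n)
    (a : Fin n → G) (x : G) : -C ≤ (∑ i, f.1 (a i * x)) / n := by
  rw [le_div_iff₀ (by positivity)]
  calc (-C) * n = ∑ _i : Fin n, (-C) := by simp [mul_comm]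
    _ ≤ ∑ i, f.1 (a i * x) := Finset.sum_le_sum fun i _ => hC _

lemma bddAbove_avg (f : ellInfty G) {n : ℕ} (hn : 0 < n) (a : Fin n → G) :
    BddAbove (Set.range fun x : G => (∑ i, f.1 (a i * x)) / n) := by
  obtain ⟨C, _, hC⟩ := exists_bound f
  exact ⟨C, by rintro r ⟨x, rfl⟩; exact avg_le (fun y => (abs_le.1 (hC y)).2) hn a x⟩

lemma avgSup_le {f : ellInfty G} {C : ℝ} (hC : ∀ x, f.1 x ≤ C) {n : ℕ} (hn : 0 < n)
    (a : Fin n → G) : avgSup f a ≤ C :=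
  ciSup_le fun x => avg_le hC hn a x

lemma le_avgSup (f : ellInfty G) {n : ℕ} (hn : 0 < n) (a : Fin n → G) (x : G) :
    (∑ i, f.1 (a i * x)) / n ≤ avgSup f a :=
  le_ciSup (bddAbove_avg f hn a) x

/-- The candidate sublinear functional. -/
noncomputable def invP (f : ellInfty G) : ℝ :=
  sInf {r | ∃ n, 0 < n ∧ ∃ a : Fin n → G, r = avgSup f a}

lemma meanSet_nonempty (f : ellInfty G) :
    {r | ∃ n, 0 < n ∧ ∃ a : Fin n → G, r = avgSup f a}.Nonempty :=
  ⟨avgSup f (fun _ : Fin 1 => 1), 1, one_pos, _, rfl⟩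

lemma meanSet_bddBelow (f : ellInfty G) :
    BddBelow {r | ∃ n, 0 < n ∧ ∃ a : Fin n → G, r = avgSup f a} := by
  obtain ⟨C, _, hC⟩ := exists_bound f
  refine ⟨-C, ?_⟩
  rintro r ⟨n, hn, a, rfl⟩
  exact le_trans (le_avg (fun y => neg_le_of_abs_le (hC y)) hn a 1) (le_avgSup f hn a 1)

lemma invP_le (f : ellInfty G) {n : ℕ} (hn : 0 < n) (a : Fin n → G) :
    invP f ≤ avgSup f a :=
  csInf_le (meanSet_bddBelow f) ⟨n, hn, a, rfl⟩

lemma invP_add (f h : ellInfty G) : invP (f + h) ≤ invP f + invP h := by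
  have key : ∀ (n : ℕ), 0 < n → ∀ (a : Fin n → G) (m : ℕ), 0 < m → ∀ (b : Fin m → G),
      invP (f + h) ≤ avgSup f a + avgSup h b := by
    intro n hn a m hm b
    set e : Fin (n * m) ≃ Fin n × Fin m := finProdFinEquiv.symm
    set c : Fin (n * m) → G := fun k => a (e k).1 * b (e k).2 with hc
    have hnm : 0 < n * m := Nat.mul_pos hn hm
    refine le_trans (invP_le (f + h) hnm c) ?_
    refine ciSup_le fun x => ?_
    have hsplit : ∑ k, (f + h).1 (c k * x)
        = (∑ p : Fin n × Fin m, f.1 (a p.1 * (b p.2 * x)))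
          + ∑ p : Fin n × Fin m, h.1 (b p.2 * (a p.1 * x)) := by
      rw [← Finset.sum_add_distrib]
      rw [← Equiv.sum_comp e (fun p : Fin n × Fin m =>
        f.1 (a p.1 * (b p.2 * x)) + h.1 (b p.2 * (a p.1 * x)))]
      refine Finset.sum_congr rfl fun k _ => ?_
      have : (f + h).1 (c k * x) = f.1 (c k * x) + h.1 (c k * x) := by
        simp [Submodule.coe_add, Pi.add_apply]
      rw [this, hc]
      congr 1 <;> simp [mul_assoc, mul_comm, mul_left_comm]
    have hf1 : (∑ p : Fin n × Fin m, f.1 (a p.1 * (b p.2 * x))) ≤ (n * m : ℕ) * avgSup f a := by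
      rw [Fintype.sum_prod_type_right]
      calc ∑ j : Fin m, ∑ i : Fin n, f.1 (a i * (b j * x))
          ≤ ∑ _j : Fin m, (n : ℝ) * avgSup f a := by
            refine Finset.sum_le_sum fun j _ => ?_
            have := le_avgSup f hn a (b j * x)
            rw [div_le_iff₀ (by positivity)] at this
            linarith [this]
        _ = (n * m : ℕ) * avgSup f a := by
            rw [Finset.sum_const, Finset.card_univ, Fintype.card_fin]
            push_cast; ring
    have hh1 : (∑ p : Fin n × Fin m, h.1 (b p.2 * (a p.1 * x))) ≤ (n * m : ℕ) * avgSup h b := by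
      rw [Fintype.sum_prod_type]
      calc ∑ i : Fin n, ∑ j : Fin m, h.1 (b j * (a i * x))
          ≤ ∑ _i : Fin n, (m : ℝ) * avgSup h b := by
            refine Finset.sum_le_sum fun i _ => ?_
            have := le_avgSup h hm b (a i * x)
            rw [div_le_iff₀ (by positivity)] at this
            linarith [this]
        _ = (n * m : ℕ) * avgSup h b := by
            rw [Finset.sum_const, Finset.card_univ, Fintype.card_fin]
            push_cast; ring
    rw [div_le_iff₀ (by positivity), hsplit]
    calc _ ≤ (n * m : ℕ) * avgSup f a + (n * m : ℕ) * avgSup h b := add_le_add hf1 hh1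
      _ = (avgSup f a + avgSup h b) * (n * m : ℕ) := by ring
  have step1 : ∀ (m : ℕ), 0 < m → ∀ (b : Fin m → G),
      invP (f + h) - avgSup h b ≤ invP f := by
    intro m hm b
    refine le_csInf (meanSet_nonempty f) ?_
    rintro r ⟨n, hn, a, rfl⟩
    linarith [key n hn a m hm b]
  have step2 : invP (f + h) - invP f ≤ invP h := by
    refine le_csInf (meanSet_nonempty h) ?_
    rintro r ⟨m, hm, b, rfl⟩
    linarith [step1 m hm b]
  linarith

lemma invP_smul (c : ℝ) (hc : 0 < c) (f : ellInfty G) : invP (c • f) = c * invP f := by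
  have hav : ∀ (n : ℕ) (a : Fin n → G), avgSup (c • f) a = c * avgSup f a := by
    intro n a
    unfold avgSup
    rw [Real.mul_iSup_of_nonneg hc.le]
    congr 1
    funext x
    have hv : ∀ y, (c • f).1 y = c * f.1 y := fun y => rfl
    simp only [hv, ← Finset.mul_sum, mul_div_assoc]
  unfold invP
  rw [show {r | ∃ n, 0 < n ∧ ∃ a : Fin n → G, r = avgSup (c • f) a}
      = c • {r | ∃ n, 0 < n ∧ ∃ a : Fin n → G, r = avgSup f a} from ?_]
  · rw [Real.sInf_smul_of_nonneg hc.le]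
    rfl
  · ext r
    constructor
    · rintro ⟨n, hn, a, rfl⟩
      exact ⟨avgSup f a, ⟨n, hn, a, rfl⟩, (hav n a).symm⟩
    · rintro ⟨s, ⟨n, hn, a, rfl⟩, rfl⟩
      exact ⟨n, hn, a, (hav n a).symm⟩

lemma invP_const (c : ℝ) : invP (c • oneFn G) = c := by
  have hav : ∀ (n : ℕ), 0 < n → ∀ (a : Fin n → G), avgSup (c • oneFn G) a = c := by
    intro n hn a
    have hco : ((c • oneFn G : ellInfty G) : G → ℝ) = fun _ => c := by
      funext y
      simp [oneFn]
    have hfun : (fun x : G => (∑ i, (c • oneFn G).1 (a i * x)) / n) = fun _ : G => c := by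
      funext x
      simp only [hco]
      rw [Finset.sum_const, Finset.card_univ, Fintype.card_fin]
      field_simp
      rw [nsmul_eq_mul]
    unfold avgSup
    rw [hfun]
    exact ciSup_const
  apply le_antisymm
  · have h := invP_le (c • oneFn G) one_pos (fun _ : Fin 1 => (1 : G))
    rwa [hav 1 one_pos] at h
  · refine le_csInf (meanSet_nonempty _) ?_
    rintro r ⟨n, hn, a, rfl⟩
    exact (hav n hn a).ge

lemma invP_zero : invP (0 : ellInfty G) = 0 := by
  have := invP_const (G := G) 0
  rwa [zero_smul] at this

lemma invP_nonpos {f : ellInfty G} (hf : ∀ x, f.1 x ≤ 0) : invP f ≤ 0 :=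
  le_trans (invP_le f one_pos fun _ => 1) (avgSup_le hf one_pos _)

/-- Invariance estimate: `invP (actL g f - f) ≤ 0` and `invP (f - actL g f) ≤ 0`. -/
lemma invP_translate_le (g : G) (f : ellInfty G) (sgn : Bool) :
    invP (if sgn then actL g f - f else f - actL g f) ≤ 0 := by
  obtain ⟨C, hC0, hC⟩ := exists_bound f
  set h : ellInfty G := if sgn then actL g f - f else f - actL g f with hh
  have hval : ∀ y, h.1 y = (if sgn then f.1 (g⁻¹ * y) - f.1 y else f.1 y - f.1 (g⁻¹ * y)) := by
    intro y
    cases sgn <;> simp [hh, actL, Submodule.coe_sub, smul_eq_mul]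
  set F : G → ℕ → ℝ := fun x k => f.1 ((g⁻¹) ^ k * x) with hF
  have hstep : ∀ (x : G) (i : ℕ), h.1 ((g⁻¹) ^ i * x)
      = (if sgn then F x (i + 1) - F x i else F x i - F x (i + 1)) := by
    intro x i
    rw [hval]
    have : g⁻¹ * ((g⁻¹) ^ i * x) = (g⁻¹) ^ (i + 1) * x := by
      rw [pow_succ']; group
    cases sgn <;> · simp only [Bool.false_eq_true, if_false, if_true, hF]; rw [this]
  have key : ∀ n : ℕ, 0 < n → invP h ≤ 2 * C / n := by
    intro n hn
    refine le_trans (invP_le h hn (fun i : Fin n => (g⁻¹) ^ (i : ℕ)))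
      (ciSup_le fun x => ?_)
    have htel : (∑ i : Fin n, h.1 ((g⁻¹) ^ (i : ℕ) * x))
        = (if sgn then F x n - F x 0 else F x 0 - F x n) := by
      rw [Fin.sum_univ_eq_sum_range (fun i => h.1 ((g⁻¹) ^ i * x))]
      rw [Finset.sum_congr rfl fun i _ => hstep x i]
      cases sgn
      · simpa using Finset.sum_range_sub' (F x) n
      · simpa using Finset.sum_range_sub (F x) n
    rw [htel, div_le_div_iff₀ (by positivity) (by positivity)]
    have h1 : -C ≤ F x n ∧ F x n ≤ C := abs_le.1 (hC _)
    have h2 : -C ≤ F x 0 ∧ F x 0 ≤ C := abs_le.1 (hC _)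
    have hnn : (0 : ℝ) ≤ n := by positivity
    cases sgn <;>
      · simp only [Bool.false_eq_true, if_false, if_true]
        nlinarith [h1.1, h1.2, h2.1, h2.2, hC0, hnn]
  by_contra hpos
  push_neg at hpos
  obtain ⟨n, hn⟩ := exists_nat_gt (2 * C / invP h)
  have hkey := key (n + 1) (Nat.succ_pos n)
  have hlt : 2 * C / invP h < ((n + 1 : ℕ) : ℝ) := by push_cast; linarith
  rw [div_lt_iff₀ hpos] at hlt
  rw [le_div_iff₀ (by positivity)] at hkey
  nlinarith

end Aux

/-- every abelian group is amenable. -/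
theorem amenable_of_comm (G : Type*) [CommGroup G] : Amenable G := by
  obtain ⟨m, -, hmle⟩ := exists_extension_of_le_sublinear
    (⟨⊥, 0⟩ : (ellInfty G →ₗ.[ℝ] ℝ)) invP
    (fun c hc f => invP_smul c hc f) invP_add
    (by
      rintro ⟨x, hx⟩
      rw [Submodule.mem_bot] at hx
      subst hx
      simp [invP_zero])
  have hone : m (oneFn G) = 1 := by
    have h1 : m (oneFn G) ≤ 1 := by
      have := hmle (oneFn G)
      rwa [show invP (oneFn G) = 1 by simpa using invP_const (G := G) 1] at this
    have h2 : m ((-1 : ℝ) • oneFn G) ≤ -1 :=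
      le_of_le_of_eq (hmle _) (invP_const (G := G) (-1))
    rw [map_smul, smul_eq_mul] at h2
    linarith
  refine ⟨m, ⟨fun f hf => ?_, hone⟩, fun g f => ?_⟩
  · have := hmle (-f)
    have hle : invP (-f) ≤ 0 := invP_nonpos (fun x => by
      have : (-f).1 x = -(f.1 x) := rfl
      rw [this]; linarith [hf x])
    rw [map_neg] at this
    linarith
  · have h1 := le_trans (hmle (actL g f - f)) (by simpa using invP_translate_le g f true)
    have h2 := le_trans (hmle (f - actL g f)) (by simpa using invP_translate_le g f false)
    rw [map_sub] at h1 h2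
    linarith
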